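/- Let $\omega$ be non-optimal for the concave dual $\max_{\omega\in Z^\perp}\phi^C(\omega)$ and let $\{(x^k,z^k)\}\subset\operatorname{conv}(X)\times Z$ satisfy $z^k\in\arg\min_{z\in Z}\|Qx^k-z\|$ and $(x^k,z^k)\to(x^*,z^*)\in\arg\min\{L_\rho(x,z,\omega):x\in\operatorname{conv}(X),z\in Z\}$. Then for any $\gamma\in(0,1)$, there exists a finite $K$ such that for all $k\ge K$, $\gamma\le\dfrac{\widecheck\phi(\omega+\rho(Qx^k-z^k),x^k)-\widecheck\phi(\omega,x^{k-1})}{\widehat\phi(\omega,x^k,z^k)-\widecheck\phi(\omega,x^{k-1})}\le1$, where $\widehat\phi(\omega,x,z)=L_\rho(x,z,\omega)+\tfrac{\rho}{2}\|Qx-z\|_2^2$. -/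

import Mathlib

open RealInnerProductSpace Filter Topology

set_option maxHeartbeats 1000000

noncomputable def phiC {n q : ℕ} (f : EuclideanSpace ℝ (Fin n) → ℝ)
    (Q : EuclideanSpace ℝ (Fin n) →ₗ[ℝ] EuclideanSpace ℝ (Fin q))
    (X : Set (EuclideanSpace ℝ (Fin n))) (ω : EuclideanSpace ℝ (Fin q)) : ℝ :=
  sInf {r : ℝ | ∃ x ∈ convexHull ℝ X, r = f x + ⟪ω, Q x⟫}

noncomputable def phiCheck {n q : ℕ} (f : EuclideanSpace ℝ (Fin n) → ℝ)
    (Q : EuclideanSpace ℝ (Fin n) →ₗ[ℝ] EuclideanSpace ℝ (Fin q))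
    (X : Set (EuclideanSpace ℝ (Fin n))) (ω : EuclideanSpace ℝ (Fin q))
    (xbar : EuclideanSpace ℝ (Fin n)) : ℝ :=
  sInf {r : ℝ | ∃ x ∈ convexHull ℝ X, r = f xbar + ⟪gradient f xbar, x - xbar⟫ + ⟪ω, Q x⟫}

noncomputable def augL {n q : ℕ} (f : EuclideanSpace ℝ (Fin n) → ℝ)
    (Q : EuclideanSpace ℝ (Fin n) →ₗ[ℝ] EuclideanSpace ℝ (Fin q)) (ρ : ℝ)
    (x : EuclideanSpace ℝ (Fin n)) (z ω : EuclideanSpace ℝ (Fin q)) : ℝ :=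
  f x + ⟪ω, Q x⟫ + ρ / 2 * ‖Q x - z‖ ^ 2

/-- `φ̂(ω, x, z) = L_ρ(x,z,ω) + (ρ/2)‖Qx − z‖²`. -/
noncomputable def phiHat {n q : ℕ} (f : EuclideanSpace ℝ (Fin n) → ℝ)
    (Q : EuclideanSpace ℝ (Fin n) →ₗ[ℝ] EuclideanSpace ℝ (Fin q)) (ρ : ℝ)
    (ω : EuclideanSpace ℝ (Fin q)) (x : EuclideanSpace ℝ (Fin n))
    (z : EuclideanSpace ℝ (Fin q)) : ℝ :=
  augL f Q ρ x z ω + ρ / 2 * ‖Q x - z‖ ^ 2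

lemma aux_deriv_nonneg {ψ : ℝ → ℝ} {D : ℝ} (h : HasDerivAt ψ D 0)
    (hm : ∀ t ∈ Set.Ioc (0:ℝ) 1, ψ 0 ≤ ψ t) : 0 ≤ D := by
  have hs : Tendsto (slope ψ 0) (𝓝[≠] 0) (𝓝 D) := hasDerivAt_iff_tendsto_slope.mp h
  have hmono : 𝓝[Set.Ioc (0:ℝ) 1] 0 ≤ 𝓝[≠] (0:ℝ) :=
    nhdsWithin_mono _ (fun t ht => ne_of_gt ht.1)
  have hne : (𝓝[Set.Ioc (0:ℝ) 1] (0:ℝ)).NeBot := by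
    rw [← mem_closure_iff_nhdsWithin_neBot, closure_Ioc one_ne_zero.symm]
    exact ⟨le_refl 0, zero_le_one⟩
  refine ge_of_tendsto (hs.mono_left hmono) ?_
  filter_upwards [self_mem_nhdsWithin] with t ht
  rw [slope_def_field]
  exact div_nonneg (sub_nonneg.2 (hm t ht)) (by simpa using ht.1.le)

lemma aux_slope_ge_deriv {g : ℝ → ℝ} {D : ℝ} (hg : ConvexOn ℝ Set.univ g)
    (h : HasDerivAt g D 0) : g 0 + D ≤ g 1 := by
  have hs : Tendsto (slope g 0) (𝓝[≠] 0) (𝓝 D) := hasDerivAt_iff_tendsto_slope.mp h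
  have hmono : 𝓝[Set.Ioc (0:ℝ) 1] 0 ≤ 𝓝[≠] (0:ℝ) :=
    nhdsWithin_mono _ (fun t ht => ne_of_gt ht.1)
  have hne : (𝓝[Set.Ioc (0:ℝ) 1] (0:ℝ)).NeBot := by
    rw [← mem_closure_iff_nhdsWithin_neBot, closure_Ioc one_ne_zero.symm]
    exact ⟨le_refl 0, zero_le_one⟩
  have hD : D ≤ g 1 - g 0 := by
    refine le_of_tendsto (hs.mono_left hmono) ?_
    filter_upwards [self_mem_nhdsWithin] with t ht
    have := hg.secant_mono (Set.mem_univ 0) (Set.mem_univ t) (Set.mem_univ 1)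
      (ne_of_gt ht.1) one_ne_zero ht.2
    rw [slope_def_field]
    simpa using this
  linarith

lemma aux_grad_cont {n : ℕ} (f : EuclideanSpace ℝ (Fin n) → ℝ) (hfd : ContDiff ℝ 1 f) :
    Continuous (fun y => gradient f y) := by
  have : (fun y => gradient f y) =
      fun y => (InnerProductSpace.toDual ℝ (EuclideanSpace ℝ (Fin n))).symm (fderiv ℝ f y) := rfl
  rw [this]
  exact (LinearIsometryEquiv.continuous _).comp (hfd.continuous_fderiv one_ne_zero)

lemma aux_line_deriv {n : ℕ} (f : EuclideanSpace ℝ (Fin n) → ℝ) (hfd : ContDiff ℝ 1 f)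
    (a d : EuclideanSpace ℝ (Fin n)) :
    HasDerivAt (fun t : ℝ => f (a + t • d)) ⟪gradient f a, d⟫ 0 := by
  have hline : HasDerivAt (fun t : ℝ => a + t • d) d 0 := by
    simpa using ((hasDerivAt_id (0:ℝ)).smul_const d).const_add a
  have hF := hasGradientAt_iff_hasFDerivAt.mp ((hfd.differentiable one_ne_zero) a).hasGradientAt
  rw [show a = a + (0:ℝ) • d by simp] at hF
  simpa [Function.comp_def] using hF.comp_hasDerivAt 0 hline

lemma aux_grad_ineq {n : ℕ} (f : EuclideanSpace ℝ (Fin n) → ℝ) (hf : ConvexOn ℝ Set.univ f)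
    (hfd : ContDiff ℝ 1 f) (a b : EuclideanSpace ℝ (Fin n)) :
    f a + ⟪gradient f a, b - a⟫ ≤ f b := by
  set g : ℝ → ℝ := fun t => f (a + t • (b - a)) with hgdef
  have hgc : ConvexOn ℝ Set.univ g := by
    have := hf.comp_affineMap (AffineMap.lineMap a b)
    have he : g = f ∘ (AffineMap.lineMap a b) := by
      funext t
      simp [hgdef, AffineMap.lineMap_apply, add_comm]
    rw [he]
    simpa using this
  have hg0 : HasDerivAt g ⟪gradient f a, b - a⟫ 0 := aux_line_deriv f hfd a (b - a)
  have := aux_slope_ge_deriv hgc hg0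
  simpa [hgdef] using this

theorem stmt18 (n q : ℕ) (f : EuclideanSpace ℝ (Fin n) → ℝ)
    (hf : ConvexOn ℝ Set.univ f) (hfd : ContDiff ℝ 1 f)
    (Q : EuclideanSpace ℝ (Fin n) →ₗ[ℝ] EuclideanSpace ℝ (Fin q))
    (X : Set (EuclideanSpace ℝ (Fin n))) (hX : IsCompact X) (hXne : X.Nonempty)
    (Z : Submodule ℝ (EuclideanSpace ℝ (Fin q))) (ρ : ℝ) (hρ : 0 < ρ)
    (ω : EuclideanSpace ℝ (Fin q)) (hω : ω ∈ Zᗮ)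
    (hnotopt : ∃ ω' ∈ Zᗮ, phiC f Q X ω < phiC f Q X ω')
    (x : ℕ → EuclideanSpace ℝ (Fin n)) (z : ℕ → EuclideanSpace ℝ (Fin q))
    (hxk : ∀ k, x k ∈ convexHull ℝ X) (hzk : ∀ k, z k ∈ Z)
    (hzmin : ∀ k, ∀ w ∈ Z, ‖Q (x k) - z k‖ ≤ ‖Q (x k) - w‖)
    (xstar : EuclideanSpace ℝ (Fin n)) (zstar : EuclideanSpace ℝ (Fin q))
    (hxs : xstar ∈ convexHull ℝ X) (hzs : zstar ∈ Z)
    (hmin : ∀ x' ∈ convexHull ℝ X, ∀ z' ∈ Z,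
      augL f Q ρ xstar zstar ω ≤ augL f Q ρ x' z' ω)
    (hconv : Tendsto (fun k => (x k, z k)) atTop (𝓝 (xstar, zstar)))
    (γ : ℝ) (hγ : γ ∈ Set.Ioo (0 : ℝ) 1) :
    ∃ K : ℕ, ∀ k ≥ K,
      γ ≤ (phiCheck f Q X (ω + ρ • (Q (x k) - z k)) (x k) -
            phiCheck f Q X ω (x (k - 1))) /
          (phiHat f Q ρ ω (x k) (z k) - phiCheck f Q X ω (x (k - 1))) ∧
      (phiCheck f Q X (ω + ρ • (Q (x k) - z k)) (x k) -
            phiCheck f Q X ω (x (k - 1))) /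
          (phiHat f Q ρ ω (x k) (z k) - phiCheck f Q X ω (x (k - 1))) ≤ 1 := by
  classical
  set S := convexHull ℝ X with hSdef
  have hSconv : Convex ℝ S := convex_convexHull ℝ X
  obtain ⟨x₀, hx₀X⟩ := hXne
  have hx₀ : x₀ ∈ S := subset_convexHull ℝ X hx₀X
  -- norm bound on S
  obtain ⟨R₀, hR₀⟩ := hX.isBounded.subset_closedBall 0
  set R : ℝ := max R₀ 0 with hRdef
  have hR0 : (0:ℝ) ≤ R := le_max_right _ _
  have hRS : ∀ y ∈ S, ‖y‖ ≤ R := by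
    intro y hy
    have hsub : S ⊆ Metric.closedBall 0 R :=
      convexHull_min (hR₀.trans (Metric.closedBall_subset_closedBall (le_max_left _ _)))
        (convex_closedBall _ _)
    simpa [mem_closedBall_zero_iff] using hsub hy
  set Qc := LinearMap.toContinuousLinearMap Q with hQcdef
  have hQeq : ∀ v, Q v = Qc v := fun v =>
    (congrFun (LinearMap.coe_toContinuousLinearMap' Q) v).symm
  have hQb : ∀ v ∈ S, ‖Q v‖ ≤ ‖Qc‖ * R := by
    intro v hv
    rw [hQeq]
    exact (Qc.le_opNorm v).trans (mul_le_mul_of_nonneg_left (hRS v hv) (norm_nonneg _))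
  have hfc : Continuous f := hfd.continuous
  have hgc : Continuous (fun y => gradient f y) := aux_grad_cont f hfd
  -- bddBelow of phiCheck sets
  have hbdd : ∀ (w : EuclideanSpace ℝ (Fin q)) (y : EuclideanSpace ℝ (Fin n)),
      BddBelow {r : ℝ | ∃ v ∈ S, r = f y + ⟪gradient f y, v - y⟫ + ⟪w, Q v⟫} := by
    intro w y
    refine ⟨f y - ‖gradient f y‖ * (R + ‖y‖) - ‖w‖ * (‖Qc‖ * R), ?_⟩
    rintro r ⟨v, hv, rfl⟩
    have h1 : |⟪gradient f y, v - y⟫| ≤ ‖gradient f y‖ * (R + ‖y‖) := by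
      refine (abs_real_inner_le_norm _ _).trans ?_
      have hn : ‖v - y‖ ≤ R + ‖y‖ := (norm_sub_le _ _).trans (by have := hRS v hv; linarith)
      exact mul_le_mul_of_nonneg_left hn (norm_nonneg _)
    have h2 : |⟪w, Q v⟫| ≤ ‖w‖ * (‖Qc‖ * R) := by
      refine (abs_real_inner_le_norm _ _).trans ?_
      exact mul_le_mul_of_nonneg_left (hQb v hv) (norm_nonneg _)
    have a1 := (abs_le.mp h1).1
    have a2 := (abs_le.mp h2).1
    linarith
  have hne : ∀ (w : EuclideanSpace ℝ (Fin q)) (y : EuclideanSpace ℝ (Fin n)),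
      {r : ℝ | ∃ v ∈ S, r = f y + ⟪gradient f y, v - y⟫ + ⟪w, Q v⟫}.Nonempty :=
    fun w y => ⟨_, x₀, hx₀, rfl⟩
  have hPle : ∀ (w : EuclideanSpace ℝ (Fin q)) (y : EuclideanSpace ℝ (Fin n)),
      ∀ v ∈ S, phiCheck f Q X w y ≤ f y + ⟪gradient f y, v - y⟫ + ⟪w, Q v⟫ :=
    fun w y v hv => csInf_le (hbdd w y) ⟨v, hv, rfl⟩
  have hPge : ∀ (w : EuclideanSpace ℝ (Fin q)) (y : EuclideanSpace ℝ (Fin n)) (c : ℝ),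
      (∀ v ∈ S, c ≤ f y + ⟪gradient f y, v - y⟫ + ⟪w, Q v⟫) → c ≤ phiCheck f Q X w y := by
    intro w y c h
    refine le_csInf (hne w y) ?_
    rintro r ⟨v, hv, rfl⟩
    exact h v hv
  -- continuity of phiCheck along sequences
  have hPcont : ∀ (w : ℕ → EuclideanSpace ℝ (Fin q)) (y : ℕ → EuclideanSpace ℝ (Fin n))
      (w₁ : EuclideanSpace ℝ (Fin q)) (y₁ : EuclideanSpace ℝ (Fin n)),
      Tendsto w atTop (𝓝 w₁) → Tendsto y atTop (𝓝 y₁) →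
      Tendsto (fun k => phiCheck f Q X (w k) (y k)) atTop (𝓝 (phiCheck f Q X w₁ y₁)) := by
    intro w y w₁ y₁ hw hy
    set e : ℕ → ℝ := fun k => |f (y k) - f y₁| + ‖gradient f (y k) - gradient f y₁‖ * R +
      |⟪gradient f (y k), y k⟫ - ⟪gradient f y₁, y₁⟫| + ‖w k - w₁‖ * (‖Qc‖ * R) with hedef
    have he : Tendsto e atTop (𝓝 0) := by
      have t1 : Tendsto (fun k => |f (y k) - f y₁|) atTop (𝓝 0) := by
        have := (((hfc.tendsto y₁).comp hy).sub_const (f y₁)).abs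
        simpa using this
      have t2 : Tendsto (fun k => ‖gradient f (y k) - gradient f y₁‖ * R) atTop (𝓝 0) := by
        have := ((((hgc.tendsto y₁).comp hy).sub_const (gradient f y₁)).norm).mul_const R
        simpa using this
      have t3 : Tendsto (fun k => |⟪gradient f (y k), y k⟫ - ⟪gradient f y₁, y₁⟫|) atTop (𝓝 0) := by
        have := ((((hgc.tendsto y₁).comp hy).inner hy).sub_const (⟪gradient f y₁, y₁⟫ : ℝ)).abs
        simpa using this
      have t4 : Tendsto (fun k => ‖w k - w₁‖ * (‖Qc‖ * R)) atTop (𝓝 0) := by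
        have := ((hw.sub_const w₁).norm).mul_const (‖Qc‖ * R)
        simpa using this
      have := ((t1.add t2).add t3).add t4
      simpa [hedef] using this
    have hpt : ∀ k, ∀ v ∈ S,
        |(f (y k) + ⟪gradient f (y k), v - y k⟫ + ⟪w k, Q v⟫) -
          (f y₁ + ⟪gradient f y₁, v - y₁⟫ + ⟪w₁, Q v⟫)| ≤ e k := by
      intro k v hv
      have h1 : |⟪gradient f (y k) - gradient f y₁, v⟫| ≤ ‖gradient f (y k) - gradient f y₁‖ * R :=
        (abs_real_inner_le_norm _ _).trans
          (mul_le_mul_of_nonneg_left (hRS v hv) (norm_nonneg _))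
      have h2 : |⟪w k - w₁, Q v⟫| ≤ ‖w k - w₁‖ * (‖Qc‖ * R) :=
        (abs_real_inner_le_norm _ _).trans
          (mul_le_mul_of_nonneg_left (hQb v hv) (norm_nonneg _))
      have hexp : (f (y k) + ⟪gradient f (y k), v - y k⟫ + ⟪w k, Q v⟫) -
          (f y₁ + ⟪gradient f y₁, v - y₁⟫ + ⟪w₁, Q v⟫)
          = (f (y k) - f y₁) + ⟪gradient f (y k) - gradient f y₁, v⟫ -
            (⟪gradient f (y k), y k⟫ - ⟪gradient f y₁, y₁⟫) + ⟪w k - w₁, Q v⟫ := by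
        simp only [inner_sub_left, inner_sub_right]
        ring
      rw [hexp]
      have a1 := abs_le.mp h1
      have a2 := abs_le.mp h2
      have a3 := le_abs_self (f (y k) - f y₁)
      have a4 := neg_abs_le (f (y k) - f y₁)
      have a5 := le_abs_self (⟪gradient f (y k), y k⟫ - ⟪gradient f y₁, y₁⟫ : ℝ)
      have a6 := neg_abs_le (⟪gradient f (y k), y k⟫ - ⟪gradient f y₁, y₁⟫ : ℝ)
      rw [abs_le, hedef]
      constructor <;> · simp only []; linarith [a1.1, a1.2, a2.1, a2.2]
    have hub : ∀ k, phiCheck f Q X (w k) (y k) ≤ phiCheck f Q X w₁ y₁ + e k := by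
      intro k
      have hstep : phiCheck f Q X (w k) (y k) - e k ≤ phiCheck f Q X w₁ y₁ := by
        apply hPge w₁ y₁
        intro v hv
        have hle := hPle (w k) (y k) v hv
        have hb := (abs_le.mp (hpt k v hv)).2
        linarith
      linarith
    have hlb : ∀ k, phiCheck f Q X w₁ y₁ - e k ≤ phiCheck f Q X (w k) (y k) := by
      intro k
      apply hPge (w k) (y k)
      intro v hv
      have hle := hPle w₁ y₁ v hv
      have hb := (abs_le.mp (hpt k v hv)).1
      linarith
    have hl : Tendsto (fun k => phiCheck f Q X w₁ y₁ - e k) atTop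
        (𝓝 (phiCheck f Q X w₁ y₁)) := by
      simpa using tendsto_const_nhds.sub he
    have hu : Tendsto (fun k => phiCheck f Q X w₁ y₁ + e k) atTop
        (𝓝 (phiCheck f Q X w₁ y₁)) := by
      simpa using tendsto_const_nhds.add he
    exact tendsto_of_tendsto_of_tendsto_of_le_of_le hl hu hlb hub
  -- orthogonality of residuals
  have hperp : ∀ k, ∀ v ∈ Z, ⟪Q (x k) - z k, v⟫ = 0 := by
    intro k
    have hinf : ‖Q (x k) - z k‖ = ⨅ w : (↑Z : Set (EuclideanSpace ℝ (Fin q))), ‖Q (x k) - w‖ := by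
      refine le_antisymm (le_ciInf fun w => hzmin k w w.2) ?_
      have hb : BddBelow (Set.range fun w : (↑Z : Set (EuclideanSpace ℝ (Fin q))) =>
          ‖Q (x k) - (w : EuclideanSpace ℝ (Fin q))‖) := by
        refine ⟨0, ?_⟩
        rintro r ⟨w, rfl⟩
        positivity
      exact ciInf_le hb ⟨z k, hzk k⟩
    exact (Submodule.norm_eq_iInf_iff_real_inner_eq_zero Z (hzk k)).mp hinf
  have htx : Tendsto x atTop (𝓝 xstar) := (continuous_fst.tendsto _).comp hconv
  have htz : Tendsto z atTop (𝓝 zstar) := (continuous_snd.tendsto _).comp hconv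
  have hperps : ∀ v ∈ Z, ⟪Q xstar - zstar, v⟫ = 0 := by
    intro v hv
    have h1 : Tendsto (fun k => (⟪Q (x k) - z k, v⟫ : ℝ)) atTop
        (𝓝 (⟪Q xstar - zstar, v⟫ : ℝ)) := by
      have h1' : Tendsto (fun k => (⟪Qc (x k) - z k, v⟫ : ℝ)) atTop
          (𝓝 (⟪Qc xstar - zstar, v⟫ : ℝ)) :=
        (((Qc.continuous.tendsto xstar).comp htx).sub htz).inner tendsto_const_nhds
      simpa only [← hQeq] using h1'
    have heq : (fun k => (⟪Q (x k) - z k, v⟫ : ℝ)) = fun _ => (0:ℝ) :=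
      funext fun k => hperp k v hv
    rw [heq] at h1
    exact tendsto_nhds_unique h1 tendsto_const_nhds
  -- sandwich per k
  have hsand : ∀ k, phiCheck f Q X (ω + ρ • (Q (x k) - z k)) (x k) ≤
      phiHat f Q ρ ω (x k) (z k) := by
    intro k
    have h1 := hPle (ω + ρ • (Q (x k) - z k)) (x k) (x k) (hxk k)
    have hinner : (⟪Q (x k) - z k, Q (x k)⟫ : ℝ) = ‖Q (x k) - z k‖^2 := by
      have haux : (⟪Q (x k) - z k, (Q (x k) - z k) + z k⟫ : ℝ) = ‖Q (x k) - z k‖^2 := by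
        rw [inner_add_right, hperp k (z k) (hzk k), real_inner_self_eq_norm_sq]
        ring
      simpa [sub_add_cancel] using haux
    have h2 : f (x k) + ⟪gradient f (x k), x k - x k⟫ + ⟪ω + ρ • (Q (x k) - z k), Q (x k)⟫
        = phiHat f Q ρ ω (x k) (z k) := by
      simp only [phiHat, augL, sub_self, inner_zero_right, add_zero,
        inner_add_left, real_inner_smul_left, hinner]
      ring
    rw [h2] at h1
    exact h1
  -- first order condition at xstar
  have hFOC : ∀ v ∈ S, 0 ≤ (⟪gradient f xstar, v - xstar⟫ : ℝ) +
      ⟪ω + ρ • (Q xstar - zstar), Q v - Q xstar⟫ := by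
    intro v hv
    set d := v - xstar with hd
    set u := Q xstar - zstar with hu
    set ψ := fun t : ℝ => augL f Q ρ (xstar + t • d) zstar ω with hψ
    have hψeq : ψ = fun t : ℝ => f (xstar + t • d) + (⟪ω, Q xstar⟫ + t * ⟪ω, Q d⟫)
        + ρ/2 * (‖u‖^2 + t * (2 * ⟪u, Q d⟫) + t^2 * ‖Q d‖^2) := by
      funext t
      simp only [hψ, augL, map_add, map_smul]
      rw [inner_add_right, real_inner_smul_right]
      have h5 : Q xstar + t • Q d - zstar = u + t • Q d := by rw [hu]; abel
      rw [h5, norm_add_sq_real, real_inner_smul_right, norm_smul]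
      simp only [Real.norm_eq_abs, mul_pow, sq_abs]
      ring
    have hA : HasDerivAt (fun t : ℝ => f (xstar + t • d)) ⟪gradient f xstar, d⟫ 0 :=
      aux_line_deriv f hfd xstar d
    have hB : HasDerivAt (fun t : ℝ => (⟪ω, Q xstar⟫ : ℝ) + t * ⟪ω, Q d⟫) ⟪ω, Q d⟫ 0 := by
      simpa using ((hasDerivAt_id (0:ℝ)).mul_const (⟪ω, Q d⟫ : ℝ)).const_add
        (⟪ω, Q xstar⟫ : ℝ)
    have hC : HasDerivAt (fun t : ℝ => ‖u‖^2 + t * (2 * ⟪u, Q d⟫) + t^2 * ‖Q d‖^2)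
        (2 * ⟪u, Q d⟫) 0 := by
      have hc1 : HasDerivAt (fun t : ℝ => ‖u‖^2 + t * (2 * (⟪u, Q d⟫ : ℝ)))
          (2 * ⟪u, Q d⟫) 0 := by
        simpa using ((hasDerivAt_id (0:ℝ)).mul_const (2 * (⟪u, Q d⟫ : ℝ))).const_add (‖u‖^2)
      have hc2 : HasDerivAt (fun t : ℝ => t^2 * ‖Q d‖^2) 0 0 := by
        simpa using (hasDerivAt_pow 2 (0:ℝ)).mul_const (‖Q d‖^2)
      have hc12 := hc1.add hc2
      rw [add_zero] at hc12
      exact hc12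
    have hψd : HasDerivAt ψ ((⟪gradient f xstar, d⟫ : ℝ) + ⟪ω, Q d⟫
        + ρ/2 * (2 * ⟪u, Q d⟫)) 0 := by
      rw [hψeq]
      exact (hA.add hB).add (hC.const_mul (ρ/2))
    have hmin0 : ∀ t ∈ Set.Ioc (0:ℝ) 1, ψ 0 ≤ ψ t := by
      intro t ht
      have hmem : xstar + t • d ∈ S := hSconv.add_smul_sub_mem hxs hv ⟨ht.1.le, ht.2⟩
      have := hmin _ hmem zstar hzs
      simpa [hψ] using this
    have h0 := aux_deriv_nonneg hψd hmin0
    have heq2 : (⟪gradient f xstar, d⟫ : ℝ) + ⟪ω + ρ • u, Q v - Q xstar⟫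
        = ⟪gradient f xstar, d⟫ + ⟪ω, Q d⟫ + ρ/2 * (2 * ⟪u, Q d⟫) := by
      rw [show Q v - Q xstar = Q d by rw [hd, map_sub]]
      rw [inner_add_left, real_inner_smul_left]
      ring
    rw [heq2]
    exact h0
  -- key identities at the limit
  have hhat : phiHat f Q ρ ω xstar zstar = f xstar + ⟪ω + ρ • (Q xstar - zstar), Q xstar⟫ := by
    have hinner : (⟪Q xstar - zstar, Q xstar⟫ : ℝ) = ‖Q xstar - zstar‖^2 := by
      have haux : (⟪Q xstar - zstar, (Q xstar - zstar) + zstar⟫ : ℝ) = ‖Q xstar - zstar‖^2 := by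
        rw [inner_add_right, hperps zstar hzs, real_inner_self_eq_norm_sq]
        ring
      simpa [sub_add_cancel] using haux
    simp only [phiHat, augL, inner_add_left, real_inner_smul_left, hinner]
    ring
  have hkey : phiCheck f Q X (ω + ρ • (Q xstar - zstar)) xstar = phiHat f Q ρ ω xstar zstar := by
    rw [hhat]
    refine le_antisymm ?_ ?_
    · have := hPle (ω + ρ • (Q xstar - zstar)) xstar xstar hxs
      simpa using this
    · apply hPge
      intro v hv
      have h1 := hFOC v hv
      have h2 : (⟪ω + ρ • (Q xstar - zstar), Q v - Q xstar⟫ : ℝ)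
          = ⟪ω + ρ • (Q xstar - zstar), Q v⟫ - ⟪ω + ρ • (Q xstar - zstar), Q xstar⟫ :=
        inner_sub_right _ _ _
      linarith
  -- positivity of the denominator at the limit
  have hfm : ∃ m : ℝ, ∀ v ∈ S, m ≤ f v := by
    have hTc : IsCompact (closure S) := by
      refine (isCompact_closedBall (0 : EuclideanSpace ℝ (Fin n)) R).of_isClosed_subset
        isClosed_closure ?_
      exact closure_minimal (fun y hy => mem_closedBall_zero_iff.mpr (hRS y hy))
        Metric.isClosed_closedBall
    obtain ⟨v₀, hv₀, hminv⟩ := hTc.exists_isMinOn ⟨x₀, subset_closure hx₀⟩ hfc.continuousOn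
    exact ⟨f v₀, fun v hv => hminv (subset_closure hv)⟩
  have hposS : phiCheck f Q X ω xstar < phiHat f Q ρ ω xstar zstar := by
    by_contra hcon
    push_neg at hcon
    have hle1 : phiCheck f Q X ω xstar ≤ f xstar + ⟪ω, Q xstar⟫ := by
      have := hPle ω xstar xstar hxs
      simpa using this
    have hsq : (0:ℝ) ≤ ρ/2 * ‖Q xstar - zstar‖^2 := by positivity
    have hle2 : f xstar + ⟪ω, Q xstar⟫ ≤ phiHat f Q ρ ω xstar zstar := by
      simp only [phiHat, augL]
      linarith
    have hz0 : ‖Q xstar - zstar‖^2 = 0 := by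
      simp only [phiHat, augL] at hcon
      have hneg : ρ/2 * ‖Q xstar - zstar‖^2 ≤ 0 := by linarith
      have hzero : ρ/2 * ‖Q xstar - zstar‖^2 = 0 := le_antisymm hneg hsq
      rcases mul_eq_zero.mp hzero with h | h
      · linarith
      · exact h
    have hQz : Q xstar = zstar := by
      have := pow_eq_zero_iff (n := 2) (by norm_num) |>.mp hz0
      rwa [norm_eq_zero, sub_eq_zero] at this
    obtain ⟨ω', hω', hlt⟩ := hnotopt
    obtain ⟨m, hm⟩ := hfm
    have hbC : BddBelow {r : ℝ | ∃ v ∈ S, r = f v + ⟪ω', Q v⟫} := by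
      refine ⟨m - ‖ω'‖ * (‖Qc‖ * R), ?_⟩
      rintro r ⟨v, hv, rfl⟩
      have h2 : |⟪ω', Q v⟫| ≤ ‖ω'‖ * (‖Qc‖ * R) :=
        (abs_real_inner_le_norm _ _).trans
          (mul_le_mul_of_nonneg_left (hQb v hv) (norm_nonneg _))
      have := (abs_le.mp h2).1
      have := hm v hv
      linarith
    have h3 : phiC f Q X ω' ≤ f xstar + ⟪ω', Q xstar⟫ := csInf_le hbC ⟨xstar, hxs, rfl⟩
    have h4 : (⟪ω', Q xstar⟫ : ℝ) = 0 := by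
      rw [hQz, real_inner_comm]; exact hω' zstar hzs
    have h6 : (⟪ω, Q xstar⟫ : ℝ) = 0 := by
      rw [hQz, real_inner_comm]; exact hω zstar hzs
    have h5 : phiCheck f Q X ω xstar ≤ phiC f Q X ω := by
      refine le_csInf ⟨_, x₀, hx₀, rfl⟩ ?_
      rintro r ⟨v, hv, rfl⟩
      have hgr := aux_grad_ineq f hf hfd xstar v
      have := hPle ω xstar v hv
      linarith
    have h7 : phiHat f Q ρ ω xstar zstar = f xstar := by
      simp only [phiHat, augL, h6]
      rw [hQz]
      simp
    rw [h4] at h3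
    linarith
  -- limits
  have htx' : Tendsto (fun k => x (k - 1)) atTop (𝓝 xstar) := htx.comp (tendsto_sub_atTop_nat 1)
  have hwk : Tendsto (fun k => ω + ρ • (Q (x k) - z k)) atTop
      (𝓝 (ω + ρ • (Q xstar - zstar))) := by
    have h' : Tendsto (fun k => ω + ρ • (Qc (x k) - z k)) atTop
        (𝓝 (ω + ρ • (Qc xstar - zstar))) :=
      tendsto_const_nhds.add ((((Qc.continuous.tendsto xstar).comp htx).sub htz).const_smul ρ)
    simpa only [← hQeq] using h'
  have hnum1 := hPcont (fun k => ω + ρ • (Q (x k) - z k)) x (ω + ρ • (Q xstar - zstar)) xstar hwk htx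
  have hnum2 := hPcont (fun _ => ω) (fun k => x (k - 1)) ω xstar tendsto_const_nhds htx'
  have hHat : Tendsto (fun k => phiHat f Q ρ ω (x k) (z k)) atTop
      (𝓝 (phiHat f Q ρ ω xstar zstar)) := by
    have hQp : Continuous fun p : EuclideanSpace ℝ (Fin n) × EuclideanSpace ℝ (Fin q) =>
        Qc p.1 := Qc.continuous.comp continuous_fst
    have hc : Continuous (fun p : EuclideanSpace ℝ (Fin n) × EuclideanSpace ℝ (Fin q) =>
        phiHat f Q ρ ω p.1 p.2) := by
      simp only [phiHat, augL, hQeq]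
      exact (((hfc.comp continuous_fst).add (continuous_const.inner hQp)).add
        (continuous_const.mul (((hQp.sub continuous_snd).norm).pow 2))).add
        (continuous_const.mul (((hQp.sub continuous_snd).norm).pow 2))
    exact (hc.tendsto (xstar, zstar)).comp hconv
  set L := phiHat f Q ρ ω xstar zstar - phiCheck f Q X ω xstar with hLdef
  have hLpos : 0 < L := sub_pos.mpr hposS
  have hNum : Tendsto (fun k => phiCheck f Q X (ω + ρ • (Q (x k) - z k)) (x k) -
      phiCheck f Q X ω (x (k - 1))) atTop (𝓝 L) := by
    rw [hLdef, ← hkey]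
    exact hnum1.sub hnum2
  have hDen : Tendsto (fun k => phiHat f Q ρ ω (x k) (z k) -
      phiCheck f Q X ω (x (k - 1))) atTop (𝓝 L) := by
    rw [hLdef]
    exact hHat.sub hnum2
  have hrat : Tendsto (fun k => (phiCheck f Q X (ω + ρ • (Q (x k) - z k)) (x k) -
      phiCheck f Q X ω (x (k - 1))) / (phiHat f Q ρ ω (x k) (z k) -
      phiCheck f Q X ω (x (k - 1)))) atTop (𝓝 1) := by
    have := hNum.div hDen hLpos.ne'
    rw [div_self hLpos.ne'] at this
    exact this
  have hev1 : ∀ᶠ k in atTop, γ < (phiCheck f Q X (ω + ρ • (Q (x k) - z k)) (x k) -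
      phiCheck f Q X ω (x (k - 1))) / (phiHat f Q ρ ω (x k) (z k) -
      phiCheck f Q X ω (x (k - 1))) := hrat.eventually (eventually_gt_nhds hγ.2)
  have hev2 : ∀ᶠ k in atTop, 0 < phiHat f Q ρ ω (x k) (z k) -
      phiCheck f Q X ω (x (k - 1)) := hDen.eventually (eventually_gt_nhds hLpos)
  obtain ⟨K, hK⟩ := eventually_atTop.mp (hev1.and hev2)
  refine ⟨K, fun k hk => ⟨((hK k hk).1).le, ?_⟩⟩
  refine (div_le_one (hK k hk).2).mpr ?_
  have := hsand k
  linarith
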